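/- Let Q be a symmetric positive definite p×p matrix partitioned into K blocks with each diagonal block equal to the identity. Define V(m) = (1/2) mᵀ Q m. For the random-scan coordinate minimization that at each step picks a block k uniformly at random and minimizes V over that block (setting m_k ← m_k − (Qm)_k), the conditional expectation satisfies E[V(m_{s+1}) | m_s] = V(m_s) − (1/(2K)) m_sᵀ Q² m_s ≤ (1 − λ_min(Q)/K) V(m_s). -/

import Mathlib

open Matrix

/-- The quadratic objective `V(m) = (1/2) mᵀ Q m`. -/
noncomputable def quadV {K : ℕ} {m : Fin K → ℕ}
    (Q : Matrix ((k : Fin K) × Fin (m k)) ((k : Fin K) × Fin (m k)) ℝ)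
    (v : (k : Fin K) × Fin (m k) → ℝ) : ℝ :=
  (1 / 2) * (v ⬝ᵥ Q *ᵥ v)

/-- The coordinate minimization of `V` over block `k` (other blocks fixed), which for
identity diagonal blocks replaces `m_k` by `m_k - (Qm)_k`. -/
noncomputable def blockUpdate {K : ℕ} {m : Fin K → ℕ}
    (Q : Matrix ((k : Fin K) × Fin (m k)) ((k : Fin K) × Fin (m k)) ℝ)
    (k : Fin K) (v : (k : Fin K) × Fin (m k) → ℝ) : (k : Fin K) × Fin (m k) → ℝ :=
  fun i => if i.1 = k then v i - (Q *ᵥ v) i else v i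

/-- Key spectral inequality: `λ_min (v ⬝ Q v) ≤ ‖Qv‖²` for symmetric `Q` posdef. -/
lemma spec_ineq {n : Type*} [Fintype n] [DecidableEq n] (Q : Matrix n n ℝ)
    (hQ : Q.PosDef) (v : n → ℝ) :
    sInf (spectrum ℝ Q) * (v ⬝ᵥ Q *ᵥ v) ≤ (Q *ᵥ v) ⬝ᵥ (Q *ᵥ v) := by
  classical
  have hH := hQ.1
  set U := (hH.eigenvectorUnitary : Matrix n n ℝ) with hU
  set e := hH.eigenvalues with he
  set u := star U *ᵥ v with hu
  have hUU : star U * U = 1 := Unitary.coe_star_mul_self hH.eigenvectorUnitary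
  have hspec : Q = U * Matrix.diagonal (RCLike.ofReal ∘ e) * star U := hH.spectral_theorem
  have hD : Matrix.diagonal (RCLike.ofReal ∘ e) = Matrix.diagonal e := by
    congr 1
  have hQv : Q *ᵥ v = U *ᵥ (Matrix.diagonal e *ᵥ u) := by
    rw [hspec, hD, ← Matrix.mulVec_mulVec, ← Matrix.mulVec_mulVec, hu]
  have hdotU : ∀ x y : n → ℝ, x ⬝ᵥ U *ᵥ y = (star U *ᵥ x) ⬝ᵥ y := by
    intro x y
    rw [Matrix.dotProduct_mulVec]
    congr 1
    rw [Matrix.star_eq_conjTranspose, Matrix.conjTranspose_eq_transpose_of_trivial, Matrix.mulVec_transpose]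
  have hq1 : v ⬝ᵥ Q *ᵥ v = ∑ i, e i * (u i)^2 := by
    rw [hQv, hdotU, ← hu, dotProduct, Finset.sum_congr rfl]
    intro i _
    simp [Matrix.mulVec_diagonal]
    ring
  have hq2 : (Q *ᵥ v) ⬝ᵥ (Q *ᵥ v) = ∑ i, (e i)^2 * (u i)^2 := by
    rw [hQv, hdotU, Matrix.mulVec_mulVec, hUU, Matrix.one_mulVec, dotProduct,
      Finset.sum_congr rfl]
    intro i _
    simp [Matrix.mulVec_diagonal]
    ring
  rw [hq1, hq2, Finset.mul_sum]
  apply Finset.sum_le_sum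
  intro i _
  have hlam : sInf (spectrum ℝ Q) ≤ e i :=
    csInf_le (Set.Finite.bddBelow Q.finite_real_spectrum) (hH.eigenvalues_mem_spectrum_real i)
  have hpos : 0 < e i := hQ.eigenvalues_pos i
  calc sInf (spectrum ℝ Q) * (e i * u i ^ 2) ≤ e i * (e i * u i ^ 2) :=
        mul_le_mul_of_nonneg_right hlam (by positivity)
    _ = e i ^ 2 * u i ^ 2 := by ring

/-- Let `Q` be symmetric positive definite, partitioned into `K` blocks with
each diagonal block equal to the identity, and `V(m) = (1/2) mᵀ Q m`. For the random-scan
coordinate minimization that picks a block `k` uniformly at random and minimizes over it,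
the conditional expectation satisfies
`E[V(m_{s+1}) | m_s] = V(m_s) - (1/(2K)) m_sᵀ Q² m_s ≤ (1 - λ_min(Q)/K) V(m_s)`. -/
theorem stmt9 {K : ℕ} (hK : 0 < K) {d : Fin K → ℕ}
    (Q : Matrix ((k : Fin K) × Fin (d k)) ((k : Fin K) × Fin (d k)) ℝ)
    (hQ : Q.PosDef)
    (hdiag : ∀ i j : (k : Fin K) × Fin (d k), i.1 = j.1 → Q i j = if i = j then 1 else 0)
    (v : (k : Fin K) × Fin (d k) → ℝ) :
    (K : ℝ)⁻¹ * ∑ k : Fin K, quadV Q (blockUpdate Q k v)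
        = quadV Q v - (1 / (2 * K)) * (v ⬝ᵥ (Q * Q) *ᵥ v) ∧
      (K : ℝ)⁻¹ * ∑ k : Fin K, quadV Q (blockUpdate Q k v)
        ≤ (1 - sInf (spectrum ℝ Q) / K) * quadV Q v := by
  classical
  have hK' : (0:ℝ) < K := by exact_mod_cast hK
  set w := Q *ᵥ v with hw
  have hsym : Qᵀ = Q := by
    rw [← Matrix.conjTranspose_eq_transpose_of_trivial]; exact hQ.1
  have hswap : ∀ x y : (k : Fin K) × Fin (d k) → ℝ, x ⬝ᵥ Q *ᵥ y = (Q *ᵥ x) ⬝ᵥ y := by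
    intro x y
    rw [Matrix.dotProduct_mulVec, ← Matrix.mulVec_transpose, hsym]
  -- per-block formula
  have hblock : ∀ k, quadV Q (blockUpdate Q k v)
      = quadV Q v - (1/2) * ∑ i, (if i.1 = k then (w i)^2 else 0) := by
    intro k
    set g : (k : Fin K) × Fin (d k) → ℝ := fun i => if i.1 = k then w i else 0 with hg
    have hbu : blockUpdate Q k v = v - g := by
      funext i
      simp only [blockUpdate, hg, Pi.sub_apply]
      split <;> simp [hw]
    have hQg : ∀ i : (k : Fin K) × Fin (d k), i.1 = k → (Q *ᵥ g) i = w i := by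
      intro i hi
      simp only [Matrix.mulVec, dotProduct, hg]
      rw [Finset.sum_eq_single i]
      · simp [hdiag i i rfl, hi]
      · intro j _ hj
        by_cases hjk : j.1 = k
        · rw [hdiag i j (by rw [hi, hjk])]
          simp [Ne.symm hj]
        · simp [hjk]
      · simp
    have hgg : g ⬝ᵥ (Q *ᵥ g) = ∑ i, (if i.1 = k then (w i)^2 else 0) := by
      rw [dotProduct]
      apply Finset.sum_congr rfl
      intro i _
      by_cases hi : i.1 = k
      · rw [hQg i hi, hg]; simp only [if_pos hi]; ring
      · simp [hg, hi]
    have hgw : g ⬝ᵥ w = ∑ i, (if i.1 = k then (w i)^2 else 0) := by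
      rw [dotProduct]
      apply Finset.sum_congr rfl
      intro i _
      by_cases hi : i.1 = k <;> simp [hg, hi] <;> ring
    have hvQg : v ⬝ᵥ Q *ᵥ g = ∑ i, (if i.1 = k then (w i)^2 else 0) := by
      rw [hswap, ← hw, ← hgw, dotProduct, dotProduct]
      exact Finset.sum_congr rfl fun i _ => mul_comm _ _
    have hgQv : g ⬝ᵥ Q *ᵥ v = ∑ i, (if i.1 = k then (w i)^2 else 0) := by
      rw [← hw]; exact hgw
    rw [hbu]
    simp only [quadV, sub_dotProduct, Matrix.mulVec_sub, dotProduct_sub,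
      hvQg, hgQv, hgg]
    ring
  have hsumS : ∑ k, ∑ i, (if i.1 = k then (w i)^2 else 0) = w ⬝ᵥ w := by
    rw [Finset.sum_comm, dotProduct]
    apply Finset.sum_congr rfl
    intro i _
    rw [Finset.sum_ite_eq (Finset.univ : Finset (Fin K)) i.1 (fun _ => (w i)^2)]
    simp [pow_two]
  have hQQ : v ⬝ᵥ (Q * Q) *ᵥ v = w ⬝ᵥ w := by
    rw [← Matrix.mulVec_mulVec, ← hw, hswap, hw]
  have hsum : ∑ k : Fin K, quadV Q (blockUpdate Q k v)
      = K * quadV Q v - (1/2) * (w ⬝ᵥ w) := by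
    rw [Finset.sum_congr rfl fun k _ => hblock k, Finset.sum_sub_distrib, ← Finset.mul_sum,
      hsumS]
    simp [mul_comm]
  have heq : (K : ℝ)⁻¹ * ∑ k : Fin K, quadV Q (blockUpdate Q k v)
      = quadV Q v - (1 / (2 * K)) * (v ⬝ᵥ (Q * Q) *ᵥ v) := by
    rw [hsum, hQQ]
    field_simp
  refine ⟨heq, ?_⟩
  rw [heq, hQQ]
  have hspec : sInf (spectrum ℝ Q) * (v ⬝ᵥ Q *ᵥ v) ≤ w ⬝ᵥ w := by
    rw [hw]; exact spec_ineq Q hQ v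
  simp only [quadV]
  have h2 : (1 - sInf (spectrum ℝ Q) / K) * (1/2 * (v ⬝ᵥ Q *ᵥ v))
      = 1/2 * (v ⬝ᵥ Q *ᵥ v) - 1/(2*K) * (sInf (spectrum ℝ Q) * (v ⬝ᵥ Q *ᵥ v)) := by
    field_simp
  have h3 : 1/(2*(K:ℝ)) * (sInf (spectrum ℝ Q) * (v ⬝ᵥ Q *ᵥ v)) ≤ 1/(2*(K:ℝ)) * (w ⬝ᵥ w) :=
    mul_le_mul_of_nonneg_left hspec (by positivity)
  linarith
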